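/- There is an absolute constant c > 0 such that in the herald-protocol round model, for every vertex u, every integer k ≥ 1, every channel i ∈ {1,…,n_A}, and every subset S ⊆ N^k(u) with γ(s) > 0 for all s ∈ S, the following holds: conditioned on the event that every vertex of S operates on channel i (an event of positive probability), the probability that some vertex of N^k(u) receives a message on some channel j ∈ {1,…,n_A} with j ≠ i is at most c · π_ℓ · α(G[N^k(u)]). -/

import Mathlib

open Finset

/-- The action a vertex takes in one round: `none` is idle, `some (i, false)` is listening on
channel `i+1`, and `some (i, true)` is broadcasting on channel `i+1` (channels are numbered
`1, …, nA`). -/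
abbrev Act (nA : ℕ) := Option (Fin nA × Bool)

/-- The probability of each action in the herald-protocol round model, for a vertex with
activity `g` and listening probability `p`: on channel `i+1` the vertex listens with
probability `p·g·2^{-(i+1)}` and broadcasts with probability `(1−p)·g·2^{-(i+1)}`; with the
remaining probability it is idle. -/
noncomputable def actProb (nA : ℕ) (p g : ℝ) : Act nA → ℝ
  | some (i, false) => p * g * (2 : ℝ) ^ (-((i.1 : ℤ) + 1))
  | some (i, true) => (1 - p) * g * (2 : ℝ) ^ (-((i.1 : ℤ) + 1))
  | none => 1 - ∑ i : Fin nA, g * (2 : ℝ) ^ (-((i.1 : ℤ) + 1))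

open Classical in
/-- The probability of an event `E` in one round of the herald-protocol round model, where all
vertices choose their actions independently. -/
noncomputable def roundPr {V : Type*} [Fintype V] [DecidableEq V] (nA : ℕ) (p : ℝ)
    (γ : V → ℝ) (E : (V → Act nA) → Prop) : ℝ :=
  ∑ f : V → Act nA, if E f then ∏ v, actProb nA p (γ v) (f v) else 0

/-- `v` listens on channel `i` (i.e. channel number `i+1`). -/
def listens {V : Type*} {nA : ℕ} (f : V → Act nA) (v : V) (i : Fin nA) : Prop :=
  f v = some (i, false)

/-- `v` broadcasts on channel `i` (i.e. channel number `i+1`). -/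
def broadcasts {V : Type*} {nA : ℕ} (f : V → Act nA) (v : V) (i : Fin nA) : Prop :=
  f v = some (i, true)

/-- `v` operates (listens or broadcasts) on channel `i`. -/
def operates {V : Type*} {nA : ℕ} (f : V → Act nA) (v : V) (i : Fin nA) : Prop :=
  listens f v i ∨ broadcasts f v i

open Classical in
/-- `v` receives a message on channel `i`: it listens on channel `i` and exactly one of its
neighbors broadcasts on channel `i`. -/
def receivesOn {V : Type*} [Fintype V] [DecidableEq V] (G : SimpleGraph V)
    [DecidableRel G.Adj] {nA : ℕ} (f : V → Act nA) (v : V) (i : Fin nA) : Prop :=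
  listens f v i ∧ ((G.neighborFinset v).filter fun w => broadcasts f w i).card = 1

/-- `v` receives a message (on some channel). -/
def receives {V : Type*} [Fintype V] [DecidableEq V] (G : SimpleGraph V)
    [DecidableRel G.Adj] {nA : ℕ} (f : V → Act nA) (v : V) : Prop :=
  ∃ i : Fin nA, receivesOn G f v i

/-- `ball G u k` is the set `N^k(u)` of vertices at distance at most `k` from `u` in `G`
(including `u` itself). -/
def ball {V : Type*} (G : SimpleGraph V) (u : V) (k : ℕ) : Set V :=
  {v | ∃ p : G.Walk u v, p.length ≤ k}

/-- The independence number of the subgraph of `G` induced by a vertex set `S`. -/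
noncomputable def indepNumOn {V : Type*} [Fintype V] (G : SimpleGraph V) (S : Set V) : ℕ :=
  sSup {n | ∃ s : Finset V, ↑s ⊆ S ∧ (∀ a ∈ s, ∀ b ∈ s, a ≠ b → ¬ G.Adj a b) ∧ s.card = n}

/-- `Γ(x) = ∑_{y ∈ N(x) ∪ {x}} γ(y)`. -/
noncomputable def Gam {V : Type*} [Fintype V] [DecidableEq V] (G : SimpleGraph V)
    [DecidableRel G.Adj] (γ : V → ℝ) (x : V) : ℝ :=
  ∑ y ∈ insert x (G.neighborFinset x), γ y

/-- `Γ°(x) = ∑_{y ∈ N(x)} γ(y)`. -/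
noncomputable def GamO {V : Type*} [Fintype V] [DecidableEq V] (G : SimpleGraph V)
    [DecidableRel G.Adj] (γ : V → ℝ) (x : V) : ℝ :=
  ∑ y ∈ G.neighborFinset x, γ y

namespace HeraldAux

lemma two_zpow (j : ℕ) : (2 : ℝ) ^ (-((j:ℤ) + 1)) = (1/2 : ℝ) ^ (j + 1) := by
  rw [one_div, inv_pow, ← zpow_natCast (2:ℝ) (j+1), ← zpow_neg]
  norm_num

lemma two_zpow_pos (j : ℕ) : 0 < (2 : ℝ) ^ (-((j:ℤ) + 1)) := by positivity

lemma two_zpow_le_half (j : ℕ) : (2 : ℝ) ^ (-((j:ℤ) + 1)) ≤ 1/2 := by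
  rw [two_zpow]
  calc (1/2:ℝ)^(j+1) ≤ (1/2:ℝ)^1 := by
        apply pow_le_pow_of_le_one (by norm_num) (by norm_num) (by omega)
    _ = 1/2 := pow_one _

lemma geom_sum_eq (n : ℕ) : ∑ j ∈ Finset.range n, (1/2:ℝ)^(j+1) = 1 - (1/2:ℝ)^n := by
  induction n with
  | zero => simp
  | succ m ihm => rw [Finset.sum_range_succ, ihm]; ring

lemma geom_sum_le (n : ℕ) : ∑ j ∈ Finset.range n, (1/2:ℝ)^(j+1) ≤ 1 := by
  rw [geom_sum_eq]
  have : (0:ℝ) < (1/2:ℝ)^n := by positivity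
  linarith

lemma fin_zpow_sum_le (nA : ℕ) (g : ℝ) (hg : 0 ≤ g) (hg2 : g ≤ 1/2) :
    ∑ i : Fin nA, g * (2 : ℝ) ^ (-((i.1 : ℤ) + 1)) ≤ g := by
  have : ∑ i : Fin nA, g * (2 : ℝ) ^ (-((i.1 : ℤ) + 1))
      = g * ∑ j ∈ Finset.range nA, (1/2:ℝ)^(j+1) := by
    rw [Finset.mul_sum, ← Fin.sum_univ_eq_sum_range (fun j => g * (1/2:ℝ)^(j+1))]
    exact Finset.sum_congr rfl fun i _ => by rw [two_zpow]
  rw [this]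
  calc g * ∑ j ∈ Finset.range nA, (1/2:ℝ)^(j+1) ≤ g * 1 :=
        mul_le_mul_of_nonneg_left (geom_sum_le nA) hg
    _ = g := mul_one g

lemma actProb_nonneg {nA : ℕ} {p g : ℝ} (hp : 0 ≤ p) (hp1 : p ≤ 1)
    (hg : 0 ≤ g) (hg2 : g ≤ 1/2) (a : Act nA) : 0 ≤ actProb nA p g a := by
  match a with
  | some (i, false) =>
    show 0 ≤ p * g * (2 : ℝ) ^ (-((i.1 : ℤ) + 1))
    have := two_zpow_pos i.1
    positivity
  | some (i, true) =>
    show 0 ≤ (1 - p) * g * (2 : ℝ) ^ (-((i.1 : ℤ) + 1))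
    have := two_zpow_pos i.1
    have : (0:ℝ) ≤ 1 - p := by linarith
    positivity
  | none =>
    show 0 ≤ 1 - ∑ i : Fin nA, g * (2 : ℝ) ^ (-((i.1 : ℤ) + 1))
    have := fin_zpow_sum_le nA g hg hg2
    linarith

lemma sum_actProb (nA : ℕ) (p g : ℝ) : ∑ a : Act nA, actProb nA p g a = 1 := by
  rw [Fintype.sum_option]
  have h2 : ∑ x : Fin nA × Bool, actProb nA p g (some x)
      = ∑ i : Fin nA, g * (2 : ℝ) ^ (-((i.1 : ℤ) + 1)) := by
    rw [Fintype.sum_prod_type]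
    refine Finset.sum_congr rfl fun i _ => ?_
    rw [Fintype.sum_bool]
    show (1 - p) * g * _ + p * g * _ = _
    ring
  rw [h2]
  show 1 - ∑ i : Fin nA, g * (2 : ℝ) ^ (-((i.1 : ℤ) + 1)) + _ = 1
  ring


variable {V : Type} [Fintype V] [DecidableEq V]

open Classical in
lemma roundPr_congr (nA : ℕ) (p : ℝ) (γ : V → ℝ) {E F : (V → Act nA) → Prop}
    (h : ∀ f, E f ↔ F f) : roundPr nA p γ E = roundPr nA p γ F := by
  unfold roundPr
  exact Finset.sum_congr rfl fun f _ => by rw [if_congr (h f) rfl rfl]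

open Classical in
lemma roundPr_cyl (nA : ℕ) (p : ℝ) (γ : V → ℝ) (A : V → Finset (Act nA)) :
    roundPr nA p γ (fun f => ∀ v, f v ∈ A v)
      = ∏ v, ∑ a ∈ A v, actProb nA p (γ v) a := by
  unfold roundPr
  beta_reduce
  rw [Finset.prod_univ_sum]
  rw [← Finset.univ_inter (Fintype.piFinset A), ← Finset.sum_ite_mem]
  simp only [Fintype.mem_piFinset]
  congr!

open Classical in
lemma roundPr_le_sum {nA : ℕ} {p : ℝ} {γ : V → ℝ} (hp : 0 ≤ p) (hp1 : p ≤ 1)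
    (hγ : ∀ v, 0 ≤ γ v ∧ γ v ≤ 1/2)
    {ι : Type} (K : Finset ι) (E : (V → Act nA) → Prop) (F : ι → (V → Act nA) → Prop)
    (h : ∀ f, E f → ∃ k ∈ K, F k f) :
    roundPr nA p γ E ≤ ∑ k ∈ K, roundPr nA p γ (F k) := by
  have hnn : ∀ f : V → Act nA, 0 ≤ ∏ v, actProb nA p (γ v) (f v) := fun f =>
    Finset.prod_nonneg fun v _ => actProb_nonneg hp hp1 (hγ v).1 (hγ v).2 _
  have hite : ∀ (P : Prop) [Decidable P] (f : V → Act nA),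
      0 ≤ (if P then ∏ v, actProb nA p (γ v) (f v) else 0) := by
    intro P _ f
    split
    · exact hnn f
    · exact le_rfl
  show (∑ f : V → Act nA, if E f then ∏ v, actProb nA p (γ v) (f v) else 0)
      ≤ ∑ k ∈ K, ∑ f : V → Act nA, (if F k f then ∏ v, actProb nA p (γ v) (f v) else 0)
  calc ∑ f : V → Act nA, (if E f then ∏ v, actProb nA p (γ v) (f v) else 0)
      ≤ ∑ f : V → Act nA, ∑ k ∈ K,
          (if F k f then ∏ v, actProb nA p (γ v) (f v) else 0) := by
        apply Finset.sum_le_sum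
        intro f _
        by_cases hE : E f
        · rw [if_pos hE]
          obtain ⟨k, hk, hFk⟩ := h f hE
          have hle := Finset.single_le_sum
            (f := fun k => if F k f then ∏ v, actProb nA p (γ v) (f v) else 0)
            (fun k _ => hite _ f) hk
          beta_reduce at hle
          rw [if_pos hFk] at hle
          exact hle
        · rw [if_neg hE]
          exact Finset.sum_nonneg fun k _ => hite _ f
    _ = ∑ k ∈ K, ∑ f : V → Act nA,
          (if F k f then ∏ v, actProb nA p (γ v) (f v) else 0) := Finset.sum_comm

lemma sum_op (nA : ℕ) (p g : ℝ) (i : Fin nA) :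
    ∑ a ∈ ({some (i,false), some (i,true)} : Finset (Act nA)), actProb nA p g a
      = g * (2:ℝ)^(-((i.1:ℤ)+1)) := by
  rw [Finset.sum_pair (by simp)]
  show p * g * _ + (1-p) * g * _ = _
  ring

lemma sum_listen (nA : ℕ) (p g : ℝ) (j : Fin nA) :
    ∑ a ∈ ({some (j,false)} : Finset (Act nA)), actProb nA p g a
      = p * g * (2:ℝ)^(-((j.1:ℤ)+1)) := by
  rw [Finset.sum_singleton]; rfl

lemma sum_bcast (nA : ℕ) (p g : ℝ) (j : Fin nA) :
    ∑ a ∈ ({some (j,true)} : Finset (Act nA)), actProb nA p g a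
      = (1-p) * g * (2:ℝ)^(-((j.1:ℤ)+1)) := by
  rw [Finset.sum_singleton]; rfl

lemma sum_noBcast (nA : ℕ) (p g : ℝ) (j : Fin nA) :
    ∑ a ∈ (Finset.univ.erase (some (j,true)) : Finset (Act nA)), actProb nA p g a
      = 1 - (1-p) * g * (2:ℝ)^(-((j.1:ℤ)+1)) := by
  rw [Finset.sum_erase_eq_sub (Finset.mem_univ _), sum_actProb]
  rfl

lemma exp_quarter_le_two : Real.exp (1/4 : ℝ) ≤ 2 := by
  have h := Real.log_two_gt_d9
  have : (1/4 : ℝ) ≤ Real.log 2 := by norm_num at h ⊢; linarith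
  calc Real.exp (1/4 : ℝ) ≤ Real.exp (Real.log 2) := Real.exp_le_exp.mpr this
    _ = 2 := Real.exp_log (by norm_num)

lemma one_add_le_three_exp (P : ℝ) (hP : 0 ≤ P) : 1 + 2*P ≤ 3 * Real.exp (P/2) := by
  have h := Real.add_one_le_exp (P/4)
  have h2 : Real.exp (P/2) = Real.exp (P/4) * Real.exp (P/4) := by
    rw [← Real.exp_add]; ring_nf
  nlinarith [sq_nonneg (P - 4/3), Real.exp_pos (P/4)]

lemma prod_one_sub_le_exp {ι : Type} (T : Finset ι) (pf : ι → ℝ)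
    (h0 : ∀ y ∈ T, 0 ≤ pf y) (h1 : ∀ y ∈ T, pf y ≤ 1) :
    ∏ y ∈ T, (1 - pf y) ≤ Real.exp (-(∑ y ∈ T, pf y)) := by
  have hexp : Real.exp (-(∑ y ∈ T, pf y)) = ∏ y ∈ T, Real.exp (-(pf y)) := by
    rw [← Real.exp_sum, ← Finset.sum_neg_distrib]
  rw [hexp]
  apply Finset.prod_le_prod
  · intro y hy
    have := h1 y hy
    linarith
  · intro y hy
    have := Real.add_one_le_exp (-(pf y))
    linarith

lemma atmostone_bound {ι : Type} [DecidableEq ι] (T : Finset ι) (γf : ι → ℝ) (q pl : ℝ)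
    (hq0 : 0 < q) (hq : q ≤ 1/2) (hpl0 : 0 < pl) (hpl : pl ≤ 1/2)
    (hγ0 : ∀ y, 0 ≤ γf y) (hγ1 : ∀ y, γf y ≤ 1/2) :
    (∏ y ∈ T, (1 - (1-pl) * γf y * q)) +
      ∑ y ∈ T, ((1-pl) * γf y * q) * ∏ z ∈ T.erase y, (1 - (1-pl) * γf z * q)
      ≤ 3 * Real.exp (-((∑ y ∈ T, γf y) * q / 4)) := by
  set pf : ι → ℝ := fun y => (1-pl) * γf y * q with hpf
  have hp0 : ∀ y, 0 ≤ pf y := by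
    intro y
    have h1 := hγ0 y
    have h2 : (0:ℝ) ≤ 1 - pl := by linarith
    simp only [hpf]
    positivity
  have hp14 : ∀ y, pf y ≤ 1/4 := by
    intro y
    have h1 := hγ0 y; have h2 := hγ1 y
    simp only [hpf]
    have h3 : γf y * q ≤ (1/2) * (1/2) := mul_le_mul h2 hq hq0.le (by norm_num)
    have h4 : 0 ≤ γf y * q := mul_nonneg h1 hq0.le
    have h5 : 0 ≤ pl * (γf y * q) := mul_nonneg hpl0.le h4
    nlinarith
  set P := ∑ y ∈ T, pf y with hPdef
  have hP0 : 0 ≤ P := Finset.sum_nonneg fun y _ => hp0 y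
  have hprod : ∏ y ∈ T, (1 - pf y) ≤ Real.exp (-P) :=
    prod_one_sub_le_exp T pf (fun y _ => hp0 y) (fun y _ => by linarith [hp14 y])
  have hsump : ∑ y ∈ T, pf y * ∏ z ∈ T.erase y, (1 - pf z) ≤ 2 * (P * Real.exp (-P)) := by
    have hstep : ∀ y ∈ T, pf y * ∏ z ∈ T.erase y, (1 - pf z)
        ≤ pf y * (2 * Real.exp (-P)) := by
      intro y hy
      apply mul_le_mul_of_nonneg_left _ (hp0 y)
      have h1 : ∏ z ∈ T.erase y, (1 - pf z) ≤ Real.exp (-(∑ z ∈ T.erase y, pf z)) :=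
        prod_one_sub_le_exp _ pf (fun z _ => hp0 z) (fun z _ => by linarith [hp14 z])
      have h2 : ∑ z ∈ T.erase y, pf z = P - pf y := by
        rw [hPdef]
        exact Finset.sum_erase_eq_sub hy
      rw [h2] at h1
      have h3 : Real.exp (-(P - pf y)) = Real.exp (-P) * Real.exp (pf y) := by
        rw [← Real.exp_add]; ring_nf
      have h4 : Real.exp (pf y) ≤ 2 := by
        calc Real.exp (pf y) ≤ Real.exp (1/4 : ℝ) := Real.exp_le_exp.mpr (hp14 y)
          _ ≤ 2 := exp_quarter_le_two
      have h5 := Real.exp_pos (-P)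
      calc ∏ z ∈ T.erase y, (1 - pf z) ≤ Real.exp (-(P - pf y)) := h1
        _ = Real.exp (-P) * Real.exp (pf y) := h3
        _ ≤ Real.exp (-P) * 2 := by nlinarith
        _ = 2 * Real.exp (-P) := by ring
    calc ∑ y ∈ T, pf y * ∏ z ∈ T.erase y, (1 - pf z)
        ≤ ∑ y ∈ T, pf y * (2 * Real.exp (-P)) := Finset.sum_le_sum hstep
      _ = 2 * (P * Real.exp (-P)) := by rw [← Finset.sum_mul]; ring
  have hmain : Real.exp (-P) + 2 * (P * Real.exp (-P)) ≤ 3 * Real.exp (-(P/2)) := by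
    have h13 := one_add_le_three_exp P hP0
    have ha := Real.exp_pos (-P)
    have hac : Real.exp (-P) * Real.exp (P/2) = Real.exp (-(P/2)) := by
      rw [← Real.exp_add]; ring_nf
    nlinarith [mul_le_mul_of_nonneg_left h13 ha.le]
  have hPt : (∑ y ∈ T, γf y) * q / 4 ≤ P / 2 := by
    have hsum : P = (1 - pl) * ((∑ y ∈ T, γf y) * q) := by
      rw [hPdef, Finset.sum_mul, Finset.mul_sum]
      exact Finset.sum_congr rfl fun y _ => by simp only [hpf]; ring
    have htq : 0 ≤ (∑ y ∈ T, γf y) * q := by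
      have := Finset.sum_nonneg (fun y (_ : y ∈ T) => hγ0 y)
      positivity
    nlinarith
  have hfin : Real.exp (-(P/2)) ≤ Real.exp (-((∑ y ∈ T, γf y) * q / 4)) :=
    Real.exp_le_exp.mpr (by linarith)
  calc (∏ y ∈ T, (1 - pf y)) + ∑ y ∈ T, pf y * ∏ z ∈ T.erase y, (1 - pf z)
      ≤ Real.exp (-P) + 2 * (P * Real.exp (-P)) := by linarith
    _ ≤ 3 * Real.exp (-(P/2)) := hmain
    _ ≤ 3 * Real.exp (-((∑ y ∈ T, γf y) * q / 4)) := by linarith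
lemma channel_sum (n : ℕ) (t : ℝ) (ht : 0 ≤ t) :
    ∑ j ∈ Finset.range n, (1/2:ℝ)^(j+1) * (3 * Real.exp (-(t * (1/2:ℝ)^(j+1) / 4)))
      ≤ 27 / (1 + t) := by
  have h1t : (0:ℝ) < 1 + t := by linarith
  rw [le_div_iff₀ h1t]
  set u : ℕ → ℝ := fun j => t * (1/2:ℝ)^(j+1) / 4 with hu
  set F : ℕ → ℝ := fun j => Real.exp (-(u j)) with hF
  have hu0 : ∀ j, 0 ≤ u j := by
    intro j; rw [hu]; positivity
  have husucc : ∀ j, u (j+1) = u j / 2 := by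
    intro j
    show t * (1/2:ℝ)^(j+1+1) / 4 = t * (1/2:ℝ)^(j+1) / 4 / 2
    rw [pow_succ]
    ring
  have hFle1 : ∀ j, F j ≤ 1 := by
    intro j
    calc F j ≤ Real.exp 0 := Real.exp_le_exp.mpr (by linarith [hu0 j])
      _ = 1 := Real.exp_zero
  have hF0 : ∀ j, 0 < F j := fun j => Real.exp_pos _
  have key : ∀ j, u j * F j ≤ 2 * (F (j+1) - F j) := by
    intro j
    have h2 := Real.add_one_le_exp (u j / 2)
    have h3 : Real.exp (-(u j / 2)) * Real.exp (u j / 2) = 1 := by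
      rw [← Real.exp_add]; simp
    have h4 : F j * Real.exp (u j / 2) = Real.exp (-(u j / 2)) := by
      show Real.exp (-(u j)) * Real.exp (u j / 2) = _
      rw [← Real.exp_add]; ring_nf
    have h5 : F (j+1) = Real.exp (-(u j / 2)) := by
      show Real.exp (-(u (j+1))) = _
      rw [husucc j]
    rw [h5]
    have hFj := hF0 j
    have he := Real.exp_pos (u j / 2)
    nlinarith [hu0 j]
  have hS : ∑ j ∈ Finset.range n, (1/2:ℝ)^(j+1) * F j ≤ 1 := by
    calc ∑ j ∈ Finset.range n, (1/2:ℝ)^(j+1) * F j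
        ≤ ∑ j ∈ Finset.range n, (1/2:ℝ)^(j+1) := by
          apply Finset.sum_le_sum
          intro j _
          have h0 : (0:ℝ) < (1/2:ℝ)^(j+1) := by positivity
          nlinarith [hFle1 j, hF0 j]
      _ ≤ 1 := geom_sum_le n
  have hT : ∑ j ∈ Finset.range n, t * ((1/2:ℝ)^(j+1) * F j) ≤ 8 := by
    have hterm : ∀ j, t * ((1/2:ℝ)^(j+1) * F j) = 4 * (u j * F j) := by
      intro j
      rw [hu]
      ring
    calc ∑ j ∈ Finset.range n, t * ((1/2:ℝ)^(j+1) * F j)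
        = ∑ j ∈ Finset.range n, 4 * (u j * F j) :=
          Finset.sum_congr rfl fun j _ => hterm j
      _ ≤ ∑ j ∈ Finset.range n, 8 * (F (j+1) - F j) := by
          apply Finset.sum_le_sum
          intro j _
          have := key j
          linarith
      _ = 8 * (F n - F 0) := by rw [← Finset.mul_sum, Finset.sum_range_sub]
      _ ≤ 8 := by nlinarith [hFle1 n, hF0 0]
  calc (∑ j ∈ Finset.range n, (1/2:ℝ)^(j+1) * (3 * F j)) * (1 + t)
      = 3 * ((∑ j ∈ Finset.range n, (1/2:ℝ)^(j+1) * F j)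
          + ∑ j ∈ Finset.range n, t * ((1/2:ℝ)^(j+1) * F j)) := by
        rw [← Finset.sum_add_distrib, Finset.sum_mul, Finset.mul_sum]
        apply Finset.sum_congr rfl
        intro j _
        ring
    _ ≤ 3 * (1 + 8) := by linarith
    _ = 27 := by norm_num


lemma caro_wei (G : SimpleGraph V) [DecidableRel G.Adj] (γ : V → ℝ)
    (h0 : ∀ v, 0 ≤ γ v) (h1 : ∀ v, γ v ≤ 1) (C : Finset V) :
    ∃ s : Finset V, s ⊆ C ∧ (∀ a ∈ s, ∀ b ∈ s, a ≠ b → ¬ G.Adj a b) ∧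
      ∑ x ∈ C, γ x / (1 + ∑ y ∈ (G.neighborFinset x ∩ C), γ y) ≤ s.card := by
  induction C using Finset.strongInduction with
  | _ C ih =>
  by_cases hz : ∀ x ∈ C, γ x = 0
  · refine ⟨∅, Finset.empty_subset _, by simp, ?_⟩
    have : ∑ x ∈ C, γ x / (1 + ∑ y ∈ (G.neighborFinset x ∩ C), γ y) = 0 :=
      Finset.sum_eq_zero fun x hx => by rw [hz x hx, zero_div]
    simp [this]
  · push_neg at hz
    obtain ⟨x1, hx1C, hx1⟩ := hz
    set w : V → ℝ := fun x => γ x + ∑ y ∈ (G.neighborFinset x ∩ C), γ y with hw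
    set D := C.filter (fun x => 0 < γ x) with hD
    have hx1D : x1 ∈ D := by
      rw [hD, Finset.mem_filter]
      exact ⟨hx1C, lt_of_le_of_ne (h0 x1) (Ne.symm hx1)⟩
    obtain ⟨x0, hx0D, hx0min⟩ := Finset.exists_min_image D w ⟨x1, hx1D⟩
    have hx0C : x0 ∈ C := (Finset.mem_filter.mp hx0D).1
    have hx0γ : 0 < γ x0 := (Finset.mem_filter.mp hx0D).2
    set K := insert x0 (G.neighborFinset x0 ∩ C) with hK
    have hKC : K ⊆ C := by
      rw [hK]
      intro y hy
      rcases Finset.mem_insert.mp hy with h | h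
      · exact h ▸ hx0C
      · exact (Finset.mem_inter.mp h).2
    have hx0K : x0 ∈ K := Finset.mem_insert_self _ _
    have hC' : C \ K ⊂ C := Finset.sdiff_ssubset hKC ⟨x0, hx0K⟩
    obtain ⟨s', hs'sub, hs'ind, hs'sum⟩ := ih (C \ K) hC'
    have hx0ns' : x0 ∉ s' := fun h => by
      have := hs'sub h
      rw [Finset.mem_sdiff] at this
      exact this.2 hx0K
    have hadj : ∀ y ∈ s', ¬ G.Adj x0 y := by
      intro y hy hadj
      have hyC' := hs'sub hy
      rw [Finset.mem_sdiff] at hyC'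
      apply hyC'.2
      rw [hK]
      apply Finset.mem_insert_of_mem
      rw [Finset.mem_inter, SimpleGraph.mem_neighborFinset]
      exact ⟨hadj, hyC'.1⟩
    refine ⟨insert x0 s', ?_, ?_, ?_⟩
    · intro y hy
      rcases Finset.mem_insert.mp hy with h | h
      · exact h ▸ hx0C
      · exact (Finset.mem_sdiff.mp (hs'sub h)).1
    · intro a ha b hb hab
      rcases Finset.mem_insert.mp ha with h | h <;> rcases Finset.mem_insert.mp hb with h' | h'
      · exact absurd (h.trans h'.symm) hab
      · exact h ▸ hadj b h'
      · exact h' ▸ fun hadj' => hadj a h hadj'.symm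
      · exact hs'ind a h b h' hab
    · have hw0 : 0 < w x0 := by
        rw [hw]
        have : (0:ℝ) ≤ ∑ y ∈ (G.neighborFinset x0 ∩ C), γ y :=
          Finset.sum_nonneg fun y _ => h0 y
        dsimp only
        linarith
      have hsplit : ∑ x ∈ C, γ x / (1 + ∑ y ∈ (G.neighborFinset x ∩ C), γ y)
          = (∑ x ∈ C \ K, γ x / (1 + ∑ y ∈ (G.neighborFinset x ∩ C), γ y))
            + ∑ x ∈ K, γ x / (1 + ∑ y ∈ (G.neighborFinset x ∩ C), γ y) :=
        (Finset.sum_sdiff hKC).symm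
      have hKbound : ∑ x ∈ K, γ x / (1 + ∑ y ∈ (G.neighborFinset x ∩ C), γ y) ≤ 1 := by
        have hterm : ∀ x ∈ K, γ x / (1 + ∑ y ∈ (G.neighborFinset x ∩ C), γ y) ≤ γ x / w x0 := by
          intro x hx
          rcases eq_or_lt_of_le (h0 x) with h | h
          · rw [← h]
            simp only [zero_div]
            positivity
          · have hxD : x ∈ D := Finset.mem_filter.mpr ⟨hKC hx, h⟩
            have hwx := hx0min x hxD
            have hdenle : w x0 ≤ 1 + ∑ y ∈ (G.neighborFinset x ∩ C), γ y := by
              rw [hw] at hwx ⊢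
              have := h1 x
              dsimp only at hwx ⊢
              linarith
            exact div_le_div_of_nonneg_left (h0 x) hw0 hdenle
        calc ∑ x ∈ K, γ x / (1 + ∑ y ∈ (G.neighborFinset x ∩ C), γ y)
            ≤ ∑ x ∈ K, γ x / w x0 := Finset.sum_le_sum hterm
          _ = (∑ x ∈ K, γ x) / w x0 := by rw [Finset.sum_div]
          _ = 1 := by
              rw [hK, Finset.sum_insert (by
                rw [Finset.mem_inter]
                exact fun hc => (SimpleGraph.notMem_neighborFinset_self G x0) hc.1)]
              rw [hw]
              exact div_self (ne_of_gt hw0)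
      have hC'bound : ∑ x ∈ C \ K, γ x / (1 + ∑ y ∈ (G.neighborFinset x ∩ C), γ y)
          ≤ ∑ x ∈ C \ K, γ x / (1 + ∑ y ∈ (G.neighborFinset x ∩ (C \ K)), γ y) := by
        apply Finset.sum_le_sum
        intro x hx
        have hsub : G.neighborFinset x ∩ (C \ K) ⊆ G.neighborFinset x ∩ C :=
          Finset.inter_subset_inter_left (Finset.sdiff_subset)
        have hsums : ∑ y ∈ (G.neighborFinset x ∩ (C \ K)), γ y
            ≤ ∑ y ∈ (G.neighborFinset x ∩ C), γ y :=
          Finset.sum_le_sum_of_subset_of_nonneg hsub (fun y _ _ => h0 y)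
        have hpos : (0:ℝ) < 1 + ∑ y ∈ (G.neighborFinset x ∩ (C \ K)), γ y := by
          have : (0:ℝ) ≤ ∑ y ∈ (G.neighborFinset x ∩ (C \ K)), γ y :=
            Finset.sum_nonneg fun y _ => h0 y
          linarith
        exact div_le_div_of_nonneg_left (h0 x) hpos (by linarith)
      rw [hsplit, Finset.card_insert_of_notMem hx0ns']
      push_cast
      linarith

open Classical in
lemma roundPr_cyl_region1 (nA : ℕ) (p : ℝ) (γ : V → ℝ) (A : V → Finset (Act nA))
    (Sf : Finset V) (hoff : ∀ v, v ∉ Sf → A v = Finset.univ) :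
    roundPr nA p γ (fun f => ∀ v, f v ∈ A v)
      = ∏ v ∈ Sf, ∑ a ∈ A v, actProb nA p (γ v) a := by
  rw [roundPr_cyl]
  refine (Finset.prod_subset (Finset.subset_univ Sf) ?_).symm
  intro v _ hv
  rw [hoff v hv]
  exact sum_actProb nA p (γ v)

open Classical in
lemma roundPr_cyl_regions (nA : ℕ) (p : ℝ) (γ : V → ℝ) (A : V → Finset (Act nA))
    (Sf T : Finset V) (x : V) (hxS : x ∉ Sf) (hxT : x ∉ T) (hST : Disjoint Sf T)
    (hoff : ∀ v, v ∉ Sf → v ≠ x → v ∉ T → A v = Finset.univ) :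
    roundPr nA p γ (fun f => ∀ v, f v ∈ A v)
      = (∏ v ∈ Sf, ∑ a ∈ A v, actProb nA p (γ v) a)
        * ((∑ a ∈ A x, actProb nA p (γ x) a)
        * ∏ y ∈ T, ∑ a ∈ A y, actProb nA p (γ y) a) := by
  rw [roundPr_cyl]
  have hd : Disjoint Sf (insert x T) := by
    rw [Finset.disjoint_insert_right]
    exact ⟨hxS, hST⟩
  have hsplit : (∏ v, ∑ a ∈ A v, actProb nA p (γ v) a)
      = ∏ v ∈ Sf ∪ insert x T, ∑ a ∈ A v, actProb nA p (γ v) a := by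
    refine (Finset.prod_subset (Finset.subset_univ _) ?_).symm
    intro v _ hv
    simp only [Finset.mem_union, Finset.mem_insert, not_or] at hv
    rw [hoff v hv.1 hv.2.1 hv.2.2]
    exact sum_actProb nA p (γ v)
  rw [hsplit, Finset.prod_union hd, Finset.prod_insert hxT]
end HeraldAux

open HeraldAux

/-- There is an absolute constant `c > 0` such that in the herald-protocol round model, for
every vertex `u`, every `k ≥ 1`, every channel `i` and every `S ⊆ N^k(u)` with `γ(s) > 0` for
all `s ∈ S`: the event that every vertex of `S` operates on channel `i` has positive
probability, and conditioned on it, the probability that some vertex of `N^k(u)` receives a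
message on some channel `j ≠ i` is at most `c · π_ℓ · α(G[N^k(u)])`. -/
theorem stmt_13 : ∃ c : ℝ, 0 < c ∧
    ∀ (V : Type) [Fintype V] [DecidableEq V] (G : SimpleGraph V) [DecidableRel G.Adj]
      (nA : ℕ), 1 ≤ nA →
      ∀ pl : ℝ, 0 < pl → pl ≤ 1 / 2 →
      ∀ γ : V → ℝ, (∀ x, 0 ≤ γ x ∧ γ x ≤ 1 / 2) →
      ∀ (u : V) (k : ℕ), 1 ≤ k →
      ∀ (i : Fin nA) (S : Set V), S ⊆ ball G u k → (∀ s ∈ S, 0 < γ s) →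
      0 < roundPr nA pl γ (fun f => ∀ s ∈ S, operates f s i) ∧
      roundPr nA pl γ (fun f => (∀ s ∈ S, operates f s i) ∧
            ∃ x ∈ ball G u k, ∃ j : Fin nA, j ≠ i ∧ receivesOn G f x j) /
          roundPr nA pl γ (fun f => ∀ s ∈ S, operates f s i) ≤
        c * pl * (indepNumOn G (ball G u k) : ℝ) := by
  classical
  refine ⟨27, by norm_num, ?_⟩
  intro V _ _ G _ nA _hnA pl hpl0 hplh γ hγ u k _hk i S hSsub hSγ
  have hγ0 : ∀ v, 0 ≤ γ v := fun v => (hγ v).1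
  have hγh : ∀ v, γ v ≤ 1/2 := fun v => (hγ v).2
  have hγ1 : ∀ v, γ v ≤ 1 := fun v => by linarith [hγh v]
  have hpl1 : pl ≤ 1 := by linarith
  set Bf : Finset V := Finset.univ.filter (· ∈ ball G u k) with hBf
  set Sf : Finset V := Finset.univ.filter (· ∈ S) with hSfdef
  set C : Finset V := Bf \ Sf with hCdef
  have hq0 : ∀ j : Fin nA, 0 < (2:ℝ)^(-((j.1:ℤ)+1)) := fun j => two_zpow_pos j.1
  have hqh : ∀ j : Fin nA, (2:ℝ)^(-((j.1:ℤ)+1)) ≤ 1/2 := fun j => two_zpow_le_half j.1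
  set pr : Finset (Act nA) := {some (i,false), some (i,true)} with hpr
  set AopA : V → Finset (Act nA) := fun v => if v ∈ Sf then pr else Finset.univ with hAopA
  have hmemSf : ∀ v, v ∈ Sf ↔ v ∈ S := fun v => by simp [hSfdef]
  have hAopIff : ∀ f : V → Act nA, (∀ s ∈ S, operates f s i) ↔ ∀ v, f v ∈ AopA v := by
    intro f
    constructor
    · intro h v
      simp only [hAopA]
      by_cases hv : v ∈ Sf
      · rw [if_pos hv]
        rcases h v ((hmemSf v).mp hv) with h' | h'
        · rw [listens] at h'
          rw [hpr, h']
          exact Finset.mem_insert_self _ _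
        · rw [broadcasts] at h'
          rw [hpr, h']
          exact Finset.mem_insert_of_mem (Finset.mem_singleton_self _)
      · rw [if_neg hv]
        exact Finset.mem_univ _
    · intro h s hs
      have h2 := h s
      simp only [hAopA, if_pos ((hmemSf s).mpr hs), hpr] at h2
      rcases Finset.mem_insert.mp h2 with h' | h'
      · exact Or.inl h'
      · exact Or.inr (Finset.mem_singleton.mp h')
  have hdenEq : roundPr nA pl γ (fun f => ∀ s ∈ S, operates f s i)
      = ∏ v ∈ Sf, γ v * (2:ℝ)^(-((i.1:ℤ)+1)) := by
    rw [roundPr_congr nA pl γ hAopIff, roundPr_cyl_region1 nA pl γ AopA Sf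
      (fun v hv => by simp only [hAopA, if_neg hv])]
    refine Finset.prod_congr rfl fun v hv => ?_
    simp only [hAopA, if_pos hv, hpr]
    exact sum_op nA pl (γ v) i
  have hdenpos : 0 < roundPr nA pl γ (fun f => ∀ s ∈ S, operates f s i) := by
    rw [hdenEq]
    apply Finset.prod_pos
    intro v hv
    have h1 := hSγ v ((hmemSf v).mp hv)
    have h2 := hq0 i
    positivity
  refine ⟨hdenpos, ?_⟩
  rw [div_le_iff₀ hdenpos]
  set den : ℝ := ∏ v ∈ Sf, γ v * (2:ℝ)^(-((i.1:ℤ)+1)) with hdendef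
  rw [hdenEq]
  have hdpos : 0 < den := hdenEq ▸ hdenpos
  -- the per-(x,j) events
  set Ex : V → Fin nA → (V → Act nA) → Prop := fun x j f =>
    (∀ v, f v ∈ AopA v) ∧ f x = some (j, false) ∧
      ((G.neighborFinset x ∩ C).filter (fun y => f y = some (j, true))).card ≤ 1 with hExdef
  -- Step 1+2: union bound down to Ex
  have step1 : roundPr nA pl γ (fun f => (∀ s ∈ S, operates f s i) ∧
        ∃ x ∈ ball G u k, ∃ j : Fin nA, j ≠ i ∧ receivesOn G f x j)
      ≤ ∑ x ∈ C, roundPr nA pl γ (fun f => ∃ j : Fin nA, Ex x j f) := by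
    apply roundPr_le_sum hpl0.le hpl1 hγ
    rintro f ⟨hA, x, hxball, j, hji, hlist, hcard⟩
    have hxSf : x ∉ Sf := by
      intro hxS
      rcases hA x ((hmemSf x).mp hxS) with h' | h'
      · rw [listens] at h' hlist
        have := hlist.symm.trans h'
        simp only [Option.some.injEq, Prod.mk.injEq] at this
        exact hji this.1
      · rw [broadcasts] at h'
        rw [listens] at hlist
        have := hlist.symm.trans h'
        simp at this
    have hxC : x ∈ C := by
      rw [hCdef, Finset.mem_sdiff]
      exact ⟨by rw [hBf]; simp [hxball], hxSf⟩
    have hcard' : ((G.neighborFinset x).filter (fun y => f y = some (j, true))).card = 1 := by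
      have h2 := hcard
      simp only [broadcasts] at h2
      convert hcard using 2
      ext y
      exact ⟨fun h => Finset.mem_filter.mpr (Finset.mem_filter.mp h),
        fun h => Finset.mem_filter.mpr (Finset.mem_filter.mp h)⟩
    refine ⟨x, hxC, j, (hAopIff f).mp hA, hlist, ?_⟩
    calc ((G.neighborFinset x ∩ C).filter (fun y => f y = some (j, true))).card
        ≤ ((G.neighborFinset x).filter (fun y => f y = some (j, true))).card := by
          apply Finset.card_le_card
          exact Finset.filter_subset_filter _ Finset.inter_subset_left
      _ = 1 := hcard'
      _ ≤ 1 := le_refl 1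
  have step2 : ∀ x ∈ C, roundPr nA pl γ (fun f => ∃ j : Fin nA, Ex x j f)
      ≤ ∑ j : Fin nA, roundPr nA pl γ (Ex x j) := by
    intro x _
    apply roundPr_le_sum hpl0.le hpl1 hγ
    rintro f ⟨j, hj⟩
    exact ⟨j, Finset.mem_univ j, hj⟩
  have key : ∀ x ∈ C, ∀ j : Fin nA, roundPr nA pl γ (Ex x j)
      ≤ den * (pl * γ x * ((2:ℝ)^(-((j.1:ℤ)+1))
          * (3 * Real.exp (-((∑ y ∈ G.neighborFinset x ∩ C, γ y) * (2:ℝ)^(-((j.1:ℤ)+1)) / 4))))) := by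
    intro x hxC j
    have hxSf : x ∉ Sf := by
      rw [hCdef, Finset.mem_sdiff] at hxC
      exact hxC.2
    have hxT' : x ∉ G.neighborFinset x ∩ C := by
      intro hx
      exact (G.notMem_neighborFinset_self x) (Finset.mem_inter.mp hx).1
    have hT'C : G.neighborFinset x ∩ C ⊆ C := Finset.inter_subset_right
    have hST : Disjoint Sf (G.neighborFinset x ∩ C) := Finset.disjoint_left.mpr (fun v hvS hvT => by
      have := hT'C hvT
      rw [hCdef, Finset.mem_sdiff] at this
      exact this.2 hvS)
    have hyne : ∀ y ∈ G.neighborFinset x ∩ C, y ∉ Sf ∧ y ≠ x := by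
      intro y hy
      refine ⟨fun hyS => Finset.disjoint_left.mp hST hyS hy, fun hyx => hxT' (hyx ▸ hy)⟩
    set AA : Option V → V → Finset (Act nA) := fun o v =>
      if v ∈ Sf then pr
      else if v = x then {some (j, false)}
      else if some v = o then {some (j, true)}
      else if v ∈ G.neighborFinset x ∩ C then Finset.univ.erase (some (j, true))
      else Finset.univ with hAA
    have hoff : ∀ o : Option V, (∀ y, o = some y → y ∈ G.neighborFinset x ∩ C) →
        ∀ v, v ∉ Sf → v ≠ x → v ∉ G.neighborFinset x ∩ C → AA o v = Finset.univ := by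
      intro o ho v h1 h2 h3
      simp only [hAA]
      rw [if_neg h1, if_neg h2, if_neg, if_neg h3]
      intro hvo
      exact h3 (ho v hvo.symm)
    have step3 : roundPr nA pl γ (Ex x j)
        ≤ ∑ o ∈ insert none ((G.neighborFinset x ∩ C).image some),
            roundPr nA pl γ (fun f => ∀ v, f v ∈ AA o v) := by
      apply roundPr_le_sum hpl0.le hpl1 hγ
      rintro f ⟨hAf, hfx, hle⟩
      have hAfS : ∀ v, v ∈ Sf → f v ∈ pr := by
        intro v hv
        have h2 := hAf v
        simp only [hAopA, if_pos hv] at h2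
        exact h2
      rcases Nat.le_one_iff_eq_zero_or_eq_one.mp hle with h0 | h1
      · rw [Finset.card_eq_zero, Finset.filter_eq_empty_iff] at h0
        refine ⟨none, Finset.mem_insert_self _ _, ?_⟩
        intro v
        simp only [hAA]
        by_cases hv1 : v ∈ Sf
        · rw [if_pos hv1]; exact hAfS v hv1
        · rw [if_neg hv1]
          by_cases hv2 : v = x
          · rw [if_pos hv2, hv2, Finset.mem_singleton]; exact hfx
          · rw [if_neg hv2, if_neg (by simp : ¬(some v = (none : Option V)))]
            by_cases hv3 : v ∈ G.neighborFinset x ∩ C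
            · rw [if_pos hv3]
              exact Finset.mem_erase.mpr ⟨h0 hv3, Finset.mem_univ _⟩
            · rw [if_neg hv3]; exact Finset.mem_univ _
      · obtain ⟨y, hy⟩ := Finset.card_eq_one.mp h1
        have hymem : y ∈ (G.neighborFinset x ∩ C).filter (fun z => f z = some (j, true)) := by
          rw [hy]; exact Finset.mem_singleton_self y
        obtain ⟨hyT, hfy⟩ := Finset.mem_filter.mp hymem
        refine ⟨some y, Finset.mem_insert_of_mem (Finset.mem_image_of_mem some hyT), ?_⟩
        intro v
        simp only [hAA]
        by_cases hv1 : v ∈ Sf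
        · rw [if_pos hv1]; exact hAfS v hv1
        · rw [if_neg hv1]
          by_cases hv2 : v = x
          · rw [if_pos hv2, hv2, Finset.mem_singleton]; exact hfx
          · rw [if_neg hv2]
            by_cases hv4 : some v = some y
            · rw [if_pos hv4, Finset.mem_singleton]
              have hvy : v = y := Option.some_injective V hv4
              rw [hvy]; exact hfy
            · rw [if_neg hv4]
              by_cases hv3 : v ∈ G.neighborFinset x ∩ C
              · rw [if_pos hv3]
                refine Finset.mem_erase.mpr ⟨?_, Finset.mem_univ _⟩
                intro hfv
                have hvin : v ∈ (G.neighborFinset x ∩ C).filter (fun z => f z = some (j, true)) :=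
                  Finset.mem_filter.mpr ⟨hv3, hfv⟩
                rw [hy, Finset.mem_singleton] at hvin
                exact hv4 (by rw [hvin])
              · rw [if_neg hv3]; exact Finset.mem_univ _
    have hmassS : ∀ o : Option V, ∏ v ∈ Sf, ∑ a ∈ AA o v, actProb nA pl (γ v) a = den := by
      intro o
      rw [hdendef]
      refine Finset.prod_congr rfl fun v hv => ?_
      simp only [hAA, if_pos hv, hpr]
      exact sum_op nA pl (γ v) i
    have hmassx : ∀ o : Option V, ∑ a ∈ AA o x, actProb nA pl (γ x) a
        = pl * γ x * (2:ℝ)^(-((j.1:ℤ)+1)) := by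
      intro o
      simp only [hAA, if_neg hxSf, if_pos rfl]
      exact sum_listen nA pl (γ x) j
    have hnone : roundPr nA pl γ (fun f => ∀ v, f v ∈ AA none v)
        = den * ((pl * γ x * (2:ℝ)^(-((j.1:ℤ)+1)))
            * ∏ y ∈ G.neighborFinset x ∩ C, (1 - (1-pl) * γ y * (2:ℝ)^(-((j.1:ℤ)+1)))) := by
      rw [roundPr_cyl_regions nA pl γ (AA none) Sf (G.neighborFinset x ∩ C) x hxSf hxT' hST
        (hoff none (by intro y h; cases h))]
      rw [hmassS none, hmassx none]
      congr 1
      congr 1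
      refine Finset.prod_congr rfl fun y hy => ?_
      obtain ⟨hyS, hyx⟩ := hyne y hy
      simp only [hAA]
      rw [if_neg hyS, if_neg hyx, if_neg (by simp : ¬(some y = (none : Option V))), if_pos hy]
      exact sum_noBcast nA pl (γ y) j
    have hsome : ∀ y ∈ G.neighborFinset x ∩ C,
        roundPr nA pl γ (fun f => ∀ v, f v ∈ AA (some y) v)
        = den * ((pl * γ x * (2:ℝ)^(-((j.1:ℤ)+1)))
            * (((1-pl) * γ y * (2:ℝ)^(-((j.1:ℤ)+1)))
              * ∏ z ∈ (G.neighborFinset x ∩ C).erase y,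
                  (1 - (1-pl) * γ z * (2:ℝ)^(-((j.1:ℤ)+1))))) := by
      intro y hyT
      rw [roundPr_cyl_regions nA pl γ (AA (some y)) Sf (G.neighborFinset x ∩ C) x hxSf hxT' hST
        (hoff (some y) (fun z h => (Option.some_injective V h) ▸ hyT))]
      rw [hmassS (some y), hmassx (some y)]
      congr 1
      congr 1
      rw [← Finset.mul_prod_erase (G.neighborFinset x ∩ C)
        (fun z => ∑ a ∈ AA (some y) z, actProb nA pl (γ z) a) hyT]
      congr 1
      · obtain ⟨hyS, hyx⟩ := hyne y hyT
        simp only [hAA]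
        rw [if_neg hyS, if_neg hyx]
        simp only [eq_self_iff_true, if_true]
        exact sum_bcast nA pl (γ y) j
      · refine Finset.prod_congr rfl fun z hz => ?_
        obtain ⟨hzy, hzT⟩ := Finset.mem_erase.mp hz
        obtain ⟨hzS, hzx⟩ := hyne z hzT
        simp only [hAA]
        rw [if_neg hzS, if_neg hzx,
          if_neg (fun h => hzy (Option.some_injective V h)), if_pos hzT]
        exact sum_noBcast nA pl (γ z) j
    have hOsum : ∑ o ∈ insert none ((G.neighborFinset x ∩ C).image some),
          roundPr nA pl γ (fun f => ∀ v, f v ∈ AA o v)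
        = den * ((pl * γ x * (2:ℝ)^(-((j.1:ℤ)+1)))
            * ((∏ y ∈ G.neighborFinset x ∩ C, (1 - (1-pl) * γ y * (2:ℝ)^(-((j.1:ℤ)+1))))
              + ∑ y ∈ G.neighborFinset x ∩ C, ((1-pl) * γ y * (2:ℝ)^(-((j.1:ℤ)+1)))
                  * ∏ z ∈ (G.neighborFinset x ∩ C).erase y,
                      (1 - (1-pl) * γ z * (2:ℝ)^(-((j.1:ℤ)+1))))) := by
      rw [Finset.sum_insert (by simp),
        Finset.sum_image (fun a _ b _ h => Option.some_injective V h), hnone,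
        Finset.sum_congr rfl (fun y hy => hsome y hy), ← Finset.mul_sum, ← Finset.mul_sum]
      ring
    have hbracket : (∏ y ∈ G.neighborFinset x ∩ C, (1 - (1-pl) * γ y * (2:ℝ)^(-((j.1:ℤ)+1))))
        + ∑ y ∈ G.neighborFinset x ∩ C, ((1-pl) * γ y * (2:ℝ)^(-((j.1:ℤ)+1)))
            * ∏ z ∈ (G.neighborFinset x ∩ C).erase y,
                (1 - (1-pl) * γ z * (2:ℝ)^(-((j.1:ℤ)+1)))
        ≤ 3 * Real.exp (-((∑ y ∈ G.neighborFinset x ∩ C, γ y) * (2:ℝ)^(-((j.1:ℤ)+1)) / 4)) :=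
      atmostone_bound (G.neighborFinset x ∩ C) γ ((2:ℝ)^(-((j.1:ℤ)+1))) pl
        (hq0 j) (hqh j) hpl0 hplh hγ0 hγh
    calc roundPr nA pl γ (Ex x j)
        ≤ ∑ o ∈ insert none ((G.neighborFinset x ∩ C).image some),
            roundPr nA pl γ (fun f => ∀ v, f v ∈ AA o v) := step3
      _ ≤ den * (pl * γ x * ((2:ℝ)^(-((j.1:ℤ)+1))
          * (3 * Real.exp (-((∑ y ∈ G.neighborFinset x ∩ C, γ y) * (2:ℝ)^(-((j.1:ℤ)+1)) / 4))))) := by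
          rw [hOsum]
          have hfac : 0 ≤ den * ((pl * γ x * (2:ℝ)^(-((j.1:ℤ)+1)))) := by
            have := hγ0 x; have := hq0 j
            positivity
          calc den * ((pl * γ x * (2:ℝ)^(-((j.1:ℤ)+1))) * _)
              ≤ den * ((pl * γ x * (2:ℝ)^(-((j.1:ℤ)+1)))
                * (3 * Real.exp (-((∑ y ∈ G.neighborFinset x ∩ C, γ y)
                    * (2:ℝ)^(-((j.1:ℤ)+1)) / 4)))) := by
                apply mul_le_mul_of_nonneg_left _ hdpos.le
                apply mul_le_mul_of_nonneg_left hbracket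
                have := hγ0 x; have := hq0 j
                positivity
            _ = den * (pl * γ x * ((2:ℝ)^(-((j.1:ℤ)+1))
                * (3 * Real.exp (-((∑ y ∈ G.neighborFinset x ∩ C, γ y)
                    * (2:ℝ)^(-((j.1:ℤ)+1)) / 4))))) := by ring
  have step5 : ∀ x ∈ C, ∑ j : Fin nA, roundPr nA pl γ (Ex x j)
      ≤ den * pl * (27 * (γ x / (1 + ∑ y ∈ G.neighborFinset x ∩ C, γ y))) := by
    intro x hxC
    set t : ℝ := ∑ y ∈ G.neighborFinset x ∩ C, γ y with htdef
    have ht0 : 0 ≤ t := Finset.sum_nonneg fun y _ => hγ0 y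
    have h1t : (0:ℝ) < 1 + t := by linarith
    have hch : ∑ j : Fin nA,
          (2:ℝ)^(-((j.1:ℤ)+1)) * (3 * Real.exp (-(t * (2:ℝ)^(-((j.1:ℤ)+1)) / 4)))
        ≤ 27 / (1 + t) := by
      have hconv : ∑ j : Fin nA,
            (2:ℝ)^(-((j.1:ℤ)+1)) * (3 * Real.exp (-(t * (2:ℝ)^(-((j.1:ℤ)+1)) / 4)))
          = ∑ jn ∈ Finset.range nA,
              (1/2:ℝ)^(jn+1) * (3 * Real.exp (-(t * (1/2:ℝ)^(jn+1) / 4))) := by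
        rw [← Fin.sum_univ_eq_sum_range
          (fun jn => (1/2:ℝ)^(jn+1) * (3 * Real.exp (-(t * (1/2:ℝ)^(jn+1) / 4)))) nA]
        exact Finset.sum_congr rfl fun j _ => by rw [two_zpow]
      rw [hconv]
      exact channel_sum nA t ht0
    calc ∑ j : Fin nA, roundPr nA pl γ (Ex x j)
        ≤ ∑ j : Fin nA, den * (pl * γ x * ((2:ℝ)^(-((j.1:ℤ)+1))
            * (3 * Real.exp (-(t * (2:ℝ)^(-((j.1:ℤ)+1)) / 4))))) :=
          Finset.sum_le_sum fun j _ => key x hxC j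
      _ = den * pl * γ x * ∑ j : Fin nA, (2:ℝ)^(-((j.1:ℤ)+1))
            * (3 * Real.exp (-(t * (2:ℝ)^(-((j.1:ℤ)+1)) / 4))) := by
          rw [Finset.mul_sum]
          exact Finset.sum_congr rfl fun j _ => by ring
      _ ≤ den * pl * γ x * (27 / (1 + t)) := by
          apply mul_le_mul_of_nonneg_left hch
          exact mul_nonneg (mul_nonneg hdpos.le hpl0.le) (hγ0 x)
      _ = den * pl * (27 * (γ x / (1 + t))) := by ring
  obtain ⟨sI, hsIC, hsIind, hsIsum⟩ := caro_wei G γ hγ0 hγ1 C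
  have hcard : (sI.card : ℝ) ≤ (indepNumOn G (ball G u k) : ℝ) := by
    have hmem : sI.card ∈ {n | ∃ s : Finset V, ↑s ⊆ ball G u k ∧
        (∀ a ∈ s, ∀ b ∈ s, a ≠ b → ¬ G.Adj a b) ∧ s.card = n} := by
      refine ⟨sI, ?_, hsIind, rfl⟩
      intro v hv
      have hvC : v ∈ C := hsIC hv
      rw [hCdef, Finset.mem_sdiff] at hvC
      have h2 := hvC.1
      rw [hBf, Finset.mem_filter] at h2
      exact h2.2
    have hbdd : BddAbove {n | ∃ s : Finset V, ↑s ⊆ ball G u k ∧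
        (∀ a ∈ s, ∀ b ∈ s, a ≠ b → ¬ G.Adj a b) ∧ s.card = n} := by
      refine ⟨Fintype.card V, ?_⟩
      rintro n ⟨s, -, -, rfl⟩
      exact Finset.card_le_univ s
    exact_mod_cast Nat.cast_le.mpr (le_csSup hbdd hmem)
  have hdp27 : (0:ℝ) ≤ den * pl * 27 :=
    mul_nonneg (mul_nonneg hdpos.le hpl0.le) (by norm_num)
  calc roundPr nA pl γ (fun f => (∀ s ∈ S, operates f s i) ∧
        ∃ x ∈ ball G u k, ∃ j : Fin nA, j ≠ i ∧ receivesOn G f x j)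
      ≤ ∑ x ∈ C, roundPr nA pl γ (fun f => ∃ j : Fin nA, Ex x j f) := step1
    _ ≤ ∑ x ∈ C, ∑ j : Fin nA, roundPr nA pl γ (Ex x j) :=
        Finset.sum_le_sum step2
    _ ≤ ∑ x ∈ C, den * pl * (27 * (γ x / (1 + ∑ y ∈ G.neighborFinset x ∩ C, γ y))) :=
        Finset.sum_le_sum step5
    _ = den * pl * 27 * ∑ x ∈ C, γ x / (1 + ∑ y ∈ G.neighborFinset x ∩ C, γ y) := by
        rw [Finset.mul_sum]
        exact Finset.sum_congr rfl fun x _ => by ring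
    _ ≤ den * pl * 27 * sI.card := mul_le_mul_of_nonneg_left hsIsum hdp27
    _ ≤ den * pl * 27 * (indepNumOn G (ball G u k) : ℝ) :=
        mul_le_mul_of_nonneg_left hcard hdp27
    _ = 27 * pl * (indepNumOn G (ball G u k) : ℝ) * den := by ring
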